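/- Every non-negative integer n can be uniquely represented as n = ∑_{i≥0} a_i F_{i+2}, where a_i ∈ {0,1,2}, a_i = 0 whenever i is odd, and whenever i < j are even indices with a_i = a_j = 2, there exists an even k with i < k < j and a_k = 0 (Chung-Graham representation). -/
import Mathlib


/-- The value represented by a finitely supported digit sequence:
    `∑ i, a i * F (i+2)` where `F` is the Fibonacci sequence. -/
def fibVal (a : ℕ →₀ ℕ) : ℕ := a.sum fun i c => c * Nat.fib (i + 2)

/-- Zeckendorf conditions: binary digits with no two consecutive 1's. -/
def IsZeckendorf (a : ℕ →₀ ℕ) : Prop :=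
  (∀ i, a i ≤ 1) ∧ (∀ i, a i * a (i + 1) = 0)

/-- Chung-Graham conditions: digits in {0,1,2}, zero at odd indices, and
    between any two even indices carrying digit 2 there is an even index
    carrying digit 0. -/
def IsChungGraham (a : ℕ →₀ ℕ) : Prop :=
  (∀ i, a i ≤ 2) ∧ (∀ i, Odd i → a i = 0) ∧
  (∀ i j, Even i → Even j → i < j → a i = 2 → a j = 2 →
    ∃ k, Even k ∧ i < k ∧ k < j ∧ a k = 0)

/-- The `cgsplit` rule: digit 0 ↦ (0,0), 1 ↦ (0,1), 2 ↦ (1,1). -/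
def IsSplit (a b c : ℕ →₀ ℕ) : Prop :=
  ∀ i, (a i = 0 → b i = 0 ∧ c i = 0) ∧
       (a i = 1 → b i = 0 ∧ c i = 1) ∧
       (a i = 2 → b i = 1 ∧ c i = 1)


/- ### Auxiliary development on digit functions -/

/-- Value of digit function `d` (digit `d t` on `F (2t+2)`) using digits below `M`. -/
def valD (d : ℕ → ℕ) (M : ℕ) : ℕ := ∑ t ∈ Finset.range M, d t * Nat.fib (2*t+2)

/-- Chung-Graham condition on digits below `M`. -/
def CondA (d : ℕ → ℕ) (M : ℕ) : Prop :=
  (∀ t, t < M → d t ≤ 2) ∧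
  ∀ t u, t < u → u < M → d t = 2 → d u = 2 → ∃ k, t < k ∧ k < u ∧ d k = 0

/-- Extra condition: every `2` below `M` has a `0` above it (below `M`). -/
def CondE (d : ℕ → ℕ) (M : ℕ) : Prop :=
  ∀ t, t < M → d t = 2 → ∃ k, t < k ∧ k < M ∧ d k = 0

lemma valD_succ (d : ℕ → ℕ) (M : ℕ) :
    valD d (M+1) = valD d M + d M * Nat.fib (2*M+2) := by
  simp [valD, Finset.sum_range_succ]

lemma condA_mono {d : ℕ → ℕ} {M : ℕ} (h : CondA d (M+1)) : CondA d M :=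
  ⟨fun t ht => h.1 t (by omega), fun t u htu hu => h.2 t u htu (by omega)⟩

lemma condA_top_le {d : ℕ → ℕ} {M : ℕ} (h : CondA d (M+1)) : d M ≤ 2 :=
  h.1 M (by omega)

lemma condA_top_two {d : ℕ → ℕ} {M : ℕ} (h : CondA d (M+1)) (h2 : d M = 2) :
    CondE d M :=
  fun t ht h2' => h.2 t M ht (by omega) h2' h2

lemma condE_top_ne {d : ℕ → ℕ} {M : ℕ} (h : CondE d (M+1)) : d M ≠ 2 := by
  intro h2
  obtain ⟨k, hk1, hk2, _⟩ := h M (by omega) h2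
  omega

lemma condE_down {d : ℕ → ℕ} {M : ℕ} (h : CondE d (M+1)) (h1 : d M ≠ 0) :
    CondE d M := by
  intro t ht h2
  obtain ⟨k, hk1, hk2, hk0⟩ := h t (by omega) h2
  have : k ≠ M := by intro hkM; rw [hkM] at hk0; exact h1 hk0
  exact ⟨k, hk1, by omega, hk0⟩

lemma condA_succ {d : ℕ → ℕ} {M : ℕ} (hA : CondA d M) (hle : d M ≤ 2)
    (hE : d M = 2 → CondE d M) : CondA d (M+1) := by
  constructor
  · intro t ht
    rcases Nat.lt_succ_iff_lt_or_eq.mp ht with h | h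
    · exact hA.1 t h
    · subst h; exact hle
  · intro t u htu hu h2 h2'
    rcases Nat.lt_succ_iff_lt_or_eq.mp hu with h | h
    · exact hA.2 t u htu h h2 h2'
    · subst h; exact hE h2' t htu h2

lemma condA_congr {d e : ℕ → ℕ} {M : ℕ} (h : ∀ t, t < M → d t = e t)
    (hA : CondA d M) : CondA e M := by
  constructor
  · intro t ht; rw [← h t ht]; exact hA.1 t ht
  · intro t u htu hu h2 h2'
    obtain ⟨k, hk1, hk2, hk0⟩ := hA.2 t u htu hu
      ((h t (by omega)).trans h2) ((h u hu).trans h2')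
    exact ⟨k, hk1, hk2, by rw [← h k (by omega)]; exact hk0⟩

lemma condE_congr {d e : ℕ → ℕ} {M : ℕ} (h : ∀ t, t < M → d t = e t)
    (hE : CondE d M) : CondE e M := by
  intro t ht h2
  obtain ⟨k, hk1, hk2, hk0⟩ := hE t ht ((h t ht).trans h2)
  exact ⟨k, hk1, hk2, by rw [← h k hk2]; exact hk0⟩

lemma valD_congr {d e : ℕ → ℕ} {M : ℕ} (h : ∀ t, t < M → d t = e t) :
    valD d M = valD e M :=
  Finset.sum_congr rfl fun t ht => by rw [h t (Finset.mem_range.mp ht)]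

/-- Bounds: a CondA configuration is `< F (2M+2)`, and with CondE it is `< F (2M+1)`. -/
lemma valD_bound : ∀ M (d : ℕ → ℕ), CondA d M →
    valD d M < Nat.fib (2*M+2) ∧ (CondE d M → valD d M < Nat.fib (2*M+1)) := by
  intro M
  induction M with
  | zero =>
    intro d _
    constructor
    · simpa [valD] using Nat.fib_pos.mpr (by omega : 0 < 2)
    · intro _; simpa [valD] using Nat.fib_pos.mpr (by omega : 0 < 1)
  | succ M ih =>
    intro d hA
    obtain ⟨b1, b2⟩ := ih d (condA_mono hA)
    have hle := condA_top_le hA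
    have f1 : Nat.fib (2*M+4) = Nat.fib (2*M+2) + Nat.fib (2*M+3) := Nat.fib_add_two
    have f2 : Nat.fib (2*M+3) = Nat.fib (2*M+1) + Nat.fib (2*M+2) := Nat.fib_add_two
    have hv := valD_succ d M
    have hidx1 : 2*(M+1)+2 = 2*M+4 := by ring
    have hidx2 : 2*(M+1)+1 = 2*M+3 := by ring
    rw [hidx1, hidx2]
    constructor
    · rcases (by omega : d M = 0 ∨ d M = 1 ∨ d M = 2) with h | h | h
      · rw [h] at hv; omega
      · rw [h] at hv; omega
      · have b2' := b2 (condA_top_two hA h)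
        rw [h] at hv; omega
    · intro hE
      have hne := condE_top_ne hE
      rcases (by omega : d M = 0 ∨ d M = 1) with h | h
      · rw [h] at hv; omega
      · have b2' := b2 (condE_down hE (by omega))
        rw [h] at hv; omega

/-- Injectivity of `valD` on CondA configurations. -/
lemma valD_inj : ∀ M (d e : ℕ → ℕ), CondA d M → CondA e M →
    valD d M = valD e M → ∀ t, t < M → d t = e t := by
  intro M
  induction M with
  | zero => intro d e _ _ _ t ht; omega
  | succ M ih =>
    intro d e hd he hv t ht
    have bd := (valD_bound M d (condA_mono hd)).1
    have be := (valD_bound M e (condA_mono he)).1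
    have hd2 := condA_top_le hd
    have he2 := condA_top_le he
    rw [valD_succ, valD_succ] at hv
    have htop : d M = e M := by
      rcases (by omega : d M = 0 ∨ d M = 1 ∨ d M = 2) with h | h | h <;>
        rcases (by omega : e M = 0 ∨ e M = 1 ∨ e M = 2) with h' | h' | h' <;>
        rw [h, h'] at hv <;> omega
    have htail : valD d M = valD e M := by
      rw [htop] at hv
      exact Nat.add_right_cancel hv
    by_cases htM : t = M
    · subst htM; exact htop
    · exact ih d e (condA_mono hd) (condA_mono he) htail t (by omega)
/-- Surjectivity: every `n < F (2M+2)` has a CondA representation, and every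
`n < F (2M+1)` has one which moreover satisfies CondE. -/
lemma valD_surj : ∀ M n : ℕ,
    (n < Nat.fib (2*M+2) →
      ∃ d, CondA d M ∧ valD d M = n ∧ ∀ t, M ≤ t → d t = 0) ∧
    (n < Nat.fib (2*M+1) →
      ∃ d, CondA d M ∧ CondE d M ∧ valD d M = n ∧ ∀ t, M ≤ t → d t = 0) := by
  intro M
  induction M with
  | zero =>
    intro n
    constructor
    · intro hn
      have hn0 : n = 0 := by
        have h1 : Nat.fib (2*0+2) = 1 := by decide
        omega
      refine ⟨fun _ => 0, ⟨fun t ht => by omega, fun t u _ hu => absurd hu (Nat.not_lt_zero u)⟩, ?_, fun t _ => rfl⟩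
      simp [valD, hn0]
    · intro hn
      have hn0 : n = 0 := by
        have h1 : Nat.fib (2*0+1) = 1 := by decide
        omega
      refine ⟨fun _ => 0, ⟨fun t ht => by omega, fun t u _ hu => absurd hu (Nat.not_lt_zero u)⟩,
        fun t ht => absurd ht (Nat.not_lt_zero t), ?_, fun t _ => rfl⟩
      simp [valD, hn0]
  | succ M ih =>
    intro n
    have f1 : Nat.fib (2*M+4) = Nat.fib (2*M+2) + Nat.fib (2*M+3) := Nat.fib_add_two
    have f2 : Nat.fib (2*M+3) = Nat.fib (2*M+1) + Nat.fib (2*M+2) := Nat.fib_add_two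
    constructor
    · intro hn
      rw [show 2*(M+1)+2 = 2*M+4 by ring] at hn
      by_cases h0 : n < Nat.fib (2*M+2)
      · obtain ⟨d, hA, hv, hz⟩ := (ih n).1 h0
        have hM0 : d M = 0 := hz M le_rfl
        refine ⟨d, condA_succ hA (by omega) (fun h2 => absurd h2 (by omega)), ?_,
          fun t ht => hz t (by omega)⟩
        rw [valD_succ, hM0]; omega
      · by_cases h1 : n < 2 * Nat.fib (2*M+2)
        · obtain ⟨d, hA, hv, hz⟩ := (ih (n - Nat.fib (2*M+2))).1 (by omega)
          refine ⟨Function.update d M 1, ?_, ?_, ?_⟩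
          · have hag : ∀ t, t < M → d t = Function.update d M 1 t :=
              fun t ht => (Function.update_of_ne (by omega) _ _).symm
            exact condA_succ (condA_congr hag hA)
              (by simp [Function.update_self]) (fun h2 => by rw [Function.update_self] at h2; omega)
          · have hag : ∀ t, t < M → d t = Function.update d M 1 t :=
              fun t ht => (Function.update_of_ne (by omega) _ _).symm
            rw [valD_succ, ← valD_congr hag, Function.update_self, hv]
            omega
          · intro t ht
            rw [Function.update_of_ne (by omega)]
            exact hz t (by omega)
        · obtain ⟨d, hA, hE, hv, hz⟩ := (ih (n - 2 * Nat.fib (2*M+2))).2 (by omega)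
          have hag : ∀ t, t < M → d t = Function.update d M 2 t :=
            fun t ht => (Function.update_of_ne (by omega) _ _).symm
          refine ⟨Function.update d M 2, ?_, ?_, ?_⟩
          · exact condA_succ (condA_congr hag hA)
              (by simp [Function.update_self])
              (fun _ => condE_congr hag hE)
          · rw [valD_succ, ← valD_congr hag, Function.update_self, hv]
            omega
          · intro t ht
            rw [Function.update_of_ne (by omega)]
            exact hz t (by omega)
    · intro hn
      rw [show 2*(M+1)+1 = 2*M+3 by ring] at hn
      by_cases h0 : n < Nat.fib (2*M+2)
      · obtain ⟨d, hA, hv, hz⟩ := (ih n).1 h0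
        have hM0 : d M = 0 := hz M le_rfl
        refine ⟨d, condA_succ hA (by omega) (fun h2 => absurd h2 (by omega)), ?_, ?_,
          fun t ht => hz t (by omega)⟩
        · intro t ht h2
          have htM : t < M := by
            rcases Nat.lt_succ_iff_lt_or_eq.mp ht with h | h
            · exact h
            · exfalso; rw [h] at h2; omega
          exact ⟨M, htM, by omega, hM0⟩
        · rw [valD_succ, hM0]; omega
      · obtain ⟨d, hA, hE, hv, hz⟩ := (ih (n - Nat.fib (2*M+2))).2 (by omega)
        have hag : ∀ t, t < M → d t = Function.update d M 1 t :=
          fun t ht => (Function.update_of_ne (by omega) _ _).symm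
        refine ⟨Function.update d M 1, ?_, ?_, ?_, ?_⟩
        · exact condA_succ (condA_congr hag hA)
            (by simp [Function.update_self]) (fun h2 => by rw [Function.update_self] at h2; omega)
        · intro t ht h2
          have htM : t < M := by
            rcases Nat.lt_succ_iff_lt_or_eq.mp ht with h | h
            · exact h
            · exfalso; rw [h, Function.update_self] at h2; omega
          rw [← hag t htM] at h2
          obtain ⟨k, hk1, hk2, hk0⟩ := hE t htM h2
          exact ⟨k, hk1, by omega, by rw [← hag k hk2]; exact hk0⟩
        · rw [valD_succ, ← valD_congr hag, Function.update_self, hv]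
          omega
        · intro t ht
          rw [Function.update_of_ne (by omega)]
          exact hz t (by omega)
/- ### Bridge between digit functions and finsupps -/

/-- The finsupp with digit `d t` at even position `2t`, for `t < M`. -/
noncomputable def mkCG (d : ℕ → ℕ) (M : ℕ) : ℕ →₀ ℕ :=
  ∑ t ∈ Finset.range M, Finsupp.single (2*t) (d t)

lemma mkCG_apply_even (d : ℕ → ℕ) (M s : ℕ) :
    mkCG d M (2*s) = if s < M then d s else 0 := by
  rw [mkCG, Finsupp.finset_sum_apply]
  simp only [Finsupp.single_apply]
  have h : ∀ t ∈ Finset.range M,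
      (if 2*t = 2*s then d t else 0) = (if t = s then d t else 0) :=
    fun t _ => if_congr (by omega) rfl rfl
  rw [Finset.sum_congr rfl h, Finset.sum_ite_eq' (Finset.range M) s d]
  simp [Finset.mem_range]

lemma mkCG_apply_odd (d : ℕ → ℕ) (M : ℕ) (i : ℕ) (h : Odd i) : mkCG d M i = 0 := by
  rw [mkCG, Finsupp.finset_sum_apply]
  refine Finset.sum_eq_zero fun t _ => ?_
  rw [Finsupp.single_apply, if_neg]
  have := Nat.odd_iff.mp h
  omega

lemma fibVal_range (a : ℕ →₀ ℕ) (N : ℕ) (hz : ∀ i, N ≤ i → a i = 0) :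
    fibVal a = ∑ i ∈ Finset.range N, a i * Nat.fib (i+2) := by
  rw [fibVal]
  refine Finsupp.sum_of_support_subset a ?_ _ ?_
  · intro i hi
    rw [Finset.mem_range]
    by_contra h
    exact (Finsupp.mem_support_iff.mp hi) (hz i (by omega))
  · intro i _
    exact zero_mul _

lemma sum_even_range (a : ℕ → ℕ) (hodd : ∀ i, Odd i → a i = 0) :
    ∀ M, ∑ i ∈ Finset.range (2*M), a i * Nat.fib (i+2)
      = ∑ t ∈ Finset.range M, a (2*t) * Nat.fib (2*t+2) := by
  intro M
  induction M with
  | zero => simp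
  | succ M ih =>
    rw [show 2*(M+1) = (2*M+1)+1 by ring, Finset.sum_range_succ, Finset.sum_range_succ,
      Finset.sum_range_succ, ih, hodd (2*M+1) (Nat.odd_iff.mpr (by omega)), zero_mul, add_zero]

lemma fibVal_mkCG (d : ℕ → ℕ) (M : ℕ) : fibVal (mkCG d M) = valD d M := by
  have hz : ∀ i, 2*M ≤ i → mkCG d M i = 0 := by
    intro i hi
    rcases Nat.even_or_odd i with ⟨t, ht⟩ | ho
    · rw [show i = 2*t by omega, mkCG_apply_even, if_neg (by omega)]
    · exact mkCG_apply_odd d M i ho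
  rw [fibVal_range _ (2*M) hz, sum_even_range _ (fun i => mkCG_apply_odd d M i) M]
  refine Finset.sum_congr rfl fun t ht => ?_
  rw [mkCG_apply_even, if_pos (Finset.mem_range.mp ht)]

lemma mkCG_isCG (d : ℕ → ℕ) (M : ℕ) (hA : CondA d M) : IsChungGraham (mkCG d M) := by
  refine ⟨?_, ?_, ?_⟩
  · intro i
    rcases Nat.even_or_odd i with ⟨t, ht⟩ | ho
    · rw [show i = 2*t by omega, mkCG_apply_even]
      split
      · exact hA.1 t ‹_›
      · omega
    · rw [mkCG_apply_odd d M i ho]; omega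
  · intro i ho; exact mkCG_apply_odd d M i ho
  · intro i j hei hej hij h2i h2j
    obtain ⟨t, ht⟩ := hei
    obtain ⟨u, hu⟩ := hej
    rw [show i = 2*t by omega, mkCG_apply_even] at h2i
    rw [show j = 2*u by omega, mkCG_apply_even] at h2j
    have htM : t < M := by by_contra h; rw [if_neg h] at h2i; omega
    have huM : u < M := by by_contra h; rw [if_neg h] at h2j; omega
    rw [if_pos htM] at h2i
    rw [if_pos huM] at h2j
    obtain ⟨k, hk1, hk2, hk0⟩ := hA.2 t u (by omega) huM h2i h2j
    refine ⟨2*k, ⟨k, two_mul k⟩, by omega, by omega, ?_⟩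
    rw [mkCG_apply_even, if_pos (by omega)]
    exact hk0

lemma fibVal_even_rep (a : ℕ →₀ ℕ) (hodd : ∀ i, Odd i → a i = 0) (M : ℕ)
    (hz : ∀ i, M ≤ i → a i = 0) :
    fibVal a = valD (fun t => a (2*t)) M := by
  rw [fibVal_range a (2*M) (fun i hi => hz i (by omega)), sum_even_range _ hodd M]
  rfl

lemma cg_condA (a : ℕ →₀ ℕ) (ha : IsChungGraham a) (M : ℕ) :
    CondA (fun t => a (2*t)) M := by
  refine ⟨fun t _ => ha.1 (2*t), ?_⟩
  intro t u htu hu h2 h2'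
  obtain ⟨k, hke, hk1, hk2, hk0⟩ :=
    ha.2.2 (2*t) (2*u) ⟨t, two_mul t⟩ ⟨u, two_mul u⟩ (by omega) h2 h2'
  obtain ⟨r, hr⟩ := hke
  refine ⟨r, by omega, by omega, ?_⟩
  show a (2*r) = 0
  rw [show 2*r = k by omega]
  exact hk0

lemma cg_unique (a b : ℕ →₀ ℕ) (ha : IsChungGraham a) (hb : IsChungGraham b)
    (hv : fibVal a = fibVal b) : a = b := by
  obtain ⟨M, haz, hbz⟩ : ∃ M, (∀ i, M ≤ i → a i = 0) ∧ (∀ i, M ≤ i → b i = 0) := by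
    refine ⟨(a.support ∪ b.support).sup id + 1, ?_, ?_⟩ <;>
    · intro i hi
      by_contra h
      have h1 : i ∈ a.support ∪ b.support := by
        simp [Finset.mem_union, Finsupp.mem_support_iff, h]
      have h2 := Finset.le_sup (f := id) h1
      simp only [id] at h2
      omega
  have hval : valD (fun t => a (2*t)) M = valD (fun t => b (2*t)) M := by
    rw [← fibVal_even_rep a ha.2.1 M haz, ← fibVal_even_rep b hb.2.1 M hbz, hv]
  have key := valD_inj M _ _ (cg_condA a ha M) (cg_condA b hb M) hval
  ext i
  rcases Nat.even_or_odd i with ⟨t, ht⟩ | ho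
  · by_cases h : t < M
    · rw [show i = 2*t by omega]
      exact key t h
    · rw [haz i (by omega), hbz i (by omega)]
  · rw [ha.2.1 i ho, hb.2.1 i ho]

lemma fib_ge (m : ℕ) : m ≤ Nat.fib (m+1) := by
  induction m with
  | zero => simp
  | succ m ih =>
    have h2 : Nat.fib (m+1+1) = Nat.fib m + Nat.fib (m+1) := Nat.fib_add_two
    rcases Nat.eq_zero_or_pos m with h | h
    · subst h; decide
    · have h1 : 0 < Nat.fib m := Nat.fib_pos.mpr h
      omega

theorem chung_graham_theorem (n : ℕ) :
    ∃! a : ℕ →₀ ℕ, IsChungGraham a ∧ fibVal a = n := by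
  have hfib : n < Nat.fib (2*(n+1)+2) := by
    have h1 := fib_ge (2*n+3)
    rw [show 2*(n+1)+2 = (2*n+3)+1 by ring]
    omega
  obtain ⟨d, hA, hval, -⟩ := (valD_surj (n+1) n).1 hfib
  refine ⟨mkCG d (n+1), ⟨mkCG_isCG d (n+1) hA, by rw [fibVal_mkCG]; exact hval⟩, ?_⟩
  rintro a ⟨hag, hav⟩
  exact cg_unique a (mkCG d (n+1)) hag (mkCG_isCG d (n+1) hA)
    (by rw [hav, fibVal_mkCG, hval])
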